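/- If the set function f : 2^V → ℝ≥0 is monotone and M_f = max over all S ⊆ V and e ∈ V \ S of f(e|S), then every second-order partial derivative of the Multinoulli Extension is bounded by B̄²·M_f: for all (p_1,…,p_K) ∈ ∏_{k=1}^K Δ_{n_k}, all k_1, k_2 ∈ {1,…,K}, all m_1 ∈ {1,…,n_{k_1}} and m_2 ∈ {1,…,n_{k_2}}, one has |∂²F/∂p_{k_1}^{m_1}∂p_{k_2}^{m_2} (p_1,…,p_K)| ≤ B̄²·M_f, where B̄ = max_{k ∈ {1,…,K}} B_k. -/

import Mathlib

open Finset

noncomputable section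

namespace Multinoulli

variable {K : ℕ}

/-- An element of the ground set `V`: a community index `k` together with the
index `m` of the element `v_k^m` inside its community `V_k`. -/
abbrev Elem (n : Fin K → ℕ) := Σ k : Fin K, Fin (n k)

/-- A sampling slot: a community `k` together with a trial index `b ∈ {1,…,B_k}`. -/
abbrev Slot (B : Fin K → ℕ) := Σ k : Fin K, Fin (B k)

/-- A joint outcome of all the independent multinoulli trials; `none` encodes a
draw of `∅`, which contributes no element. -/
abbrev Choice (n B : Fin K → ℕ) := ∀ s : Slot B, Option (Fin (n s.1))

/-- The probability that `Multi(p_k)` (the `k`-th block of `x`) assigns to a given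
outcome: `x ⟨k,m⟩` for the element `v_k^m` and `1 - Σ_m x ⟨k,m⟩` for `∅`. -/
def prob (n : Fin K → ℕ) (x : Elem n → ℝ) (k : Fin K) : Option (Fin (n k)) → ℝ
  | some m => x ⟨k, m⟩
  | none => 1 - ∑ m : Fin (n k), x ⟨k, m⟩

/-- The probability of the joint outcome `e` (all trials are mutually independent). -/
def jointProb (n B : Fin K → ℕ) (x : Elem n → ℝ) (e : Choice n B) : ℝ :=
  ∏ s : Slot B, prob n x s.1 (e s)

/-- The subset of the ground set selected by the trials whose slot lies in `A`
(a draw of `∅` contributes no element to the union). -/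
def chosen (n B : Fin K → ℕ) (e : Choice n B) (A : Finset (Slot B)) : Finset (Elem n) :=
  A.biUnion fun s => ((e s).map fun m => (⟨s.1, m⟩ : Elem n)).toFinset

/-- The Multinoulli Extension `F` of the set function `f`:
`F(x) = E[f(∪_{k,b} {e_k^b})]` for mutually independent `e_k^b ∼ Multi(p_k)`. -/
def ME (n B : Fin K → ℕ) (f : Finset (Elem n) → ℝ) (x : Elem n → ℝ) : ℝ :=
  ∑ e : Choice n B, f (chosen n B e Finset.univ) * jointProb n B x e

/-- The first-order partial derivative `∂G/∂x_i` at `x`. -/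
def pderiv (n : Fin K → ℕ) (G : (Elem n → ℝ) → ℝ) (i : Elem n) (x : Elem n → ℝ) : ℝ :=
  deriv (fun t => G (Function.update x i t)) (x i)

/-- The gradient `∇G(x)`. -/
def grad (n : Fin K → ℕ) (G : (Elem n → ℝ) → ℝ) (x : Elem n → ℝ) : Elem n → ℝ :=
  fun i => pderiv n G i x

/-- The second-order partial derivative `∂²G/∂x_i∂x_j` at `x`. -/
def pderiv2 (n : Fin K → ℕ) (G : (Elem n → ℝ) → ℝ) (i j : Elem n) (x : Elem n → ℝ) : ℝ :=
  pderiv n (fun y => pderiv n G j y) i x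

/-- The Euclidean inner product on `∏_k ℝ^{n_k}`. -/
def inner' (n : Fin K → ℕ) (u v : Elem n → ℝ) : ℝ := ∑ i : Elem n, u i * v i

/-- Membership in the product of simplices `∏_{k=1}^K Δ_{n_k}`. -/
def InSimplex (n : Fin K → ℕ) (x : Elem n → ℝ) : Prop :=
  (∀ i, 0 ≤ x i) ∧ ∀ k : Fin K, ∑ m : Fin (n k), x ⟨k, m⟩ ≤ 1

/-- Feasibility for the partition constraint: `|S ∩ V_k| ≤ B_k` for all `k`. -/
def Feasible (n B : Fin K → ℕ) (S : Finset (Elem n)) : Prop :=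
  ∀ k : Fin K, (S.filter fun i => i.1 = k).card ≤ B k

/-- Monotonicity of a set function. -/
def MonotoneSet (n : Fin K → ℕ) (f : Finset (Elem n) → ℝ) : Prop :=
  ∀ A B : Finset (Elem n), A ⊆ B → f A ≤ f B

/-- The marginal contribution `f(v|A) = f(A ∪ {v}) - f(A)`. -/
def marg (n : Fin K → ℕ) (f : Finset (Elem n) → ℝ) (v : Elem n) (A : Finset (Elem n)) : ℝ :=
  f (insert v A) - f A

/-- `α`-weak DR-submodularity: `f(v|A) ≥ α·f(v|B)` for all `A ⊆ B` and `v ∉ B`. -/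
def WeaklyDR (n : Fin K → ℕ) (f : Finset (Elem n) → ℝ) (α : ℝ) : Prop :=
  ∀ A B : Finset (Elem n), A ⊆ B → ∀ v, v ∉ B → α * marg n f v B ≤ marg n f v A

/-- `γ`-weak submodularity from below. -/
def WeaklyBelow (n : Fin K → ℕ) (f : Finset (Elem n) → ℝ) (γ : ℝ) : Prop :=
  ∀ A B : Finset (Elem n), A ⊆ B → γ * (f B - f A) ≤ ∑ v ∈ B \ A, marg n f v A

/-- `β`-weak submodularity from above. -/
def WeaklyAbove (n : Fin K → ℕ) (f : Finset (Elem n) → ℝ) (β : ℝ) : Prop :=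
  ∀ A B : Finset (Elem n), A ⊆ B → ∑ v ∈ B \ A, marg n f v (B.erase v) ≤ β * (f B - f A)

/-- The scaled indicator vector `Σ_{k=1}^K (1/B_k)·1_{S∩V_k}`. -/
def indVec (n B : Fin K → ℕ) (S : Finset (Elem n)) : Elem n → ℝ :=
  fun i => if i ∈ S then ((B i.1 : ℝ))⁻¹ else 0

def slope (n : Fin K → ℕ) (j : Elem n) (k : Fin K) : Option (Fin (n k)) → ℝ
  | some m => if (⟨k, m⟩ : Elem n) = j then 1 else 0
  | none => if k = j.1 then -1 else 0

def P (n B : Fin K → ℕ) (A : Finset (Slot B)) (x : Elem n → ℝ) (e : Choice n B) : ℝ :=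
  ∏ s ∈ A, prob n x s.1 (e s)

lemma slope_eq_zero (n : Fin K → ℕ) (j : Elem n) (k : Fin K) (h : k ≠ j.1)
    (o : Option (Fin (n k))) : slope n j k o = 0 := by
  cases o with
  | some m =>
    have : (⟨k, m⟩ : Elem n) ≠ j := fun hh => h (congrArg Sigma.fst hh)
    simp [slope, this]
  | none => simp [slope, h]

lemma prob_update (n : Fin K → ℕ) (x : Elem n → ℝ) (j : Elem n) (t : ℝ) (k : Fin K)
    (o : Option (Fin (n k))) :
    prob n (Function.update x j t) k o = prob n x k o + (t - x j) * slope n j k o := by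
  classical
  obtain ⟨jk, jm⟩ := j
  cases o with
  | some m =>
    simp only [prob, slope]
    by_cases h : (⟨k, m⟩ : Elem n) = ⟨jk, jm⟩
    · rw [h, Function.update_self]; simp
    · rw [Function.update_of_ne h]; simp [h]
  | none =>
    simp only [prob, slope]
    by_cases h : k = jk
    · subst h
      have key : ∀ m : Fin (n k),
          Function.update x ⟨k, jm⟩ t ⟨k, m⟩
            = x ⟨k, m⟩ + (if m = jm then t - x ⟨k, jm⟩ else 0) := by
        intro m
        by_cases hm : m = jm
        · subst hm; simp
        · have : (⟨k, m⟩ : Elem n) ≠ ⟨k, jm⟩ := by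
            intro hh
            exact hm (by simpa using (Sigma.mk.inj_iff.mp hh).2)
          rw [Function.update_of_ne this]; simp [hm]
      rw [Finset.sum_congr rfl fun m _ => key m, Finset.sum_add_distrib,
        Finset.sum_ite_eq' Finset.univ jm]
      simp; ring
    · have key : ∀ m : Fin (n k),
          Function.update x ⟨jk, jm⟩ t ⟨k, m⟩ = x ⟨k, m⟩ := by
        intro m
        refine Function.update_of_ne (fun hh => h ?_) _ _
        exact congrArg Sigma.fst hh
      rw [Finset.sum_congr rfl fun m _ => key m]
      simp [h]

lemma hasDerivAt_P (n B : Fin K → ℕ) (A : Finset (Slot B)) (x : Elem n → ℝ) (j : Elem n)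
    (e : Choice n B) :
    HasDerivAt (fun t => P n B A (Function.update x j t) e)
      (∑ s ∈ A, P n B (A.erase s) x e * slope n j s.1 (e s)) (x j) := by
  classical
  have h : (fun t => P n B A (Function.update x j t) e)
      = fun t => ∏ s ∈ A, (prob n x s.1 (e s) + (t - x j) * slope n j s.1 (e s)) := by
    funext t
    exact Finset.prod_congr rfl fun s _ => prob_update n x j t s.1 (e s)
  rw [h]
  have hd : ∀ s ∈ A, HasDerivAt
      (fun t => prob n x s.1 (e s) + (t - x j) * slope n j s.1 (e s))
      (slope n j s.1 (e s)) (x j) := by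
    intro s _
    simpa using (((hasDerivAt_id (x j)).sub_const (x j)).mul_const
      (slope n j s.1 (e s))).const_add (prob n x s.1 (e s))
  have := HasDerivAt.fun_finsetProd hd
  simpa [P, smul_eq_mul] using this


-- first derivative formula
lemma pderiv_ME (n B : Fin K → ℕ) (f : Finset (Elem n) → ℝ) (j : Elem n) (x : Elem n → ℝ) :
    pderiv n (ME n B f) j x
      = ∑ e : Choice n B, f (chosen n B e Finset.univ) *
          ∑ s₁ : Slot B, P n B (Finset.univ.erase s₁) x e * slope n j s₁.1 (e s₁) := by
  classical
  have hME : ∀ y : Elem n → ℝ, ME n B f y = ∑ e : Choice n B,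
      f (chosen n B e Finset.univ) * P n B Finset.univ y e := fun y => rfl
  unfold pderiv
  have hd : HasDerivAt (fun t => ME n B f (Function.update x j t))
      (∑ e : Choice n B, f (chosen n B e Finset.univ) *
        ∑ s₁ : Slot B, P n B (Finset.univ.erase s₁) x e * slope n j s₁.1 (e s₁)) (x j) := by
    have : (fun t => ME n B f (Function.update x j t))
        = fun t => ∑ e : Choice n B,
            f (chosen n B e Finset.univ) * P n B Finset.univ (Function.update x j t) e := by
      funext t; exact hME _
    rw [this]
    exact HasDerivAt.fun_sum fun e _ => (hasDerivAt_P n B Finset.univ x j e).const_mul _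
  exact hd.deriv

-- second derivative formula, rearranged
def T (n B : Fin K → ℕ) (f : Finset (Elem n) → ℝ) (i j : Elem n) (x : Elem n → ℝ)
    (s₁ s₂ : Slot B) : ℝ :=
  ∑ e : Choice n B, f (chosen n B e Finset.univ) *
    (P n B ((Finset.univ.erase s₁).erase s₂) x e * slope n i s₂.1 (e s₂) * slope n j s₁.1 (e s₁))

lemma pderiv2_ME (n B : Fin K → ℕ) (f : Finset (Elem n) → ℝ) (i j : Elem n) (x : Elem n → ℝ) :
    pderiv2 n (ME n B f) i j x
      = ∑ s₁ : Slot B, ∑ s₂ ∈ Finset.univ.erase s₁, T n B f i j x s₁ s₂ := by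
  classical
  have h1 : (fun y => pderiv n (ME n B f) j y)
      = fun y => ∑ e : Choice n B, f (chosen n B e Finset.univ) *
          ∑ s₁ : Slot B, P n B (Finset.univ.erase s₁) y e * slope n j s₁.1 (e s₁) := by
    funext y; exact pderiv_ME n B f j y
  unfold pderiv2
  rw [h1]
  unfold pderiv
  have hd : HasDerivAt
      (fun t => ∑ e : Choice n B, f (chosen n B e Finset.univ) *
        ∑ s₁ : Slot B, P n B (Finset.univ.erase s₁) (Function.update x i t) e
          * slope n j s₁.1 (e s₁))
      (∑ e : Choice n B, f (chosen n B e Finset.univ) *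
        ∑ s₁ : Slot B,
          (∑ s₂ ∈ Finset.univ.erase s₁,
            P n B ((Finset.univ.erase s₁).erase s₂) x e * slope n i s₂.1 (e s₂))
          * slope n j s₁.1 (e s₁)) (x i) :=
    HasDerivAt.fun_sum fun e _ => (HasDerivAt.fun_sum fun s₁ _ =>
      ((hasDerivAt_P n B (Finset.univ.erase s₁) x i e).mul_const _)).const_mul _
  rw [hd.deriv]
  have h2 : ∀ e : Choice n B, f (chosen n B e Finset.univ) *
      ∑ s₁ : Slot B,
        (∑ s₂ ∈ Finset.univ.erase s₁,
          P n B ((Finset.univ.erase s₁).erase s₂) x e * slope n i s₂.1 (e s₂))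
        * slope n j s₁.1 (e s₁)
      = ∑ s₁ : Slot B, ∑ s₂ ∈ Finset.univ.erase s₁,
          f (chosen n B e Finset.univ) *
            (P n B ((Finset.univ.erase s₁).erase s₂) x e * slope n i s₂.1 (e s₂)
              * slope n j s₁.1 (e s₁)) := by
    intro e
    rw [Finset.mul_sum]
    refine Finset.sum_congr rfl fun s₁ _ => ?_
    rw [Finset.sum_mul, Finset.mul_sum]
  rw [Finset.sum_congr rfl fun e _ => h2 e, Finset.sum_comm]
  exact Finset.sum_congr rfl fun s₁ _ => Finset.sum_comm


def toF (n B : Fin K → ℕ) (s : Slot B) (o : Option (Fin (n s.1))) : Finset (Elem n) :=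
  (o.map fun m => (⟨s.1, m⟩ : Elem n)).toFinset

lemma chosen_split (n B : Fin K → ℕ) (e : Choice n B) (s₁ s₂ : Slot B) (h12 : s₁ ≠ s₂) :
    chosen n B e Finset.univ
      = toF n B s₁ (e s₁) ∪ (toF n B s₂ (e s₂)
          ∪ chosen n B e ((Finset.univ.erase s₁).erase s₂)) := by
  classical
  have h2 : s₂ ∈ Finset.univ.erase s₁ :=
    Finset.mem_erase.2 ⟨fun h => h12 h.symm, Finset.mem_univ _⟩
  conv_lhs => rw [chosen, ← Finset.insert_erase (Finset.mem_univ s₁),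
    ← Finset.insert_erase h2]
  rw [Finset.biUnion_insert, Finset.biUnion_insert]
  rfl

lemma sum_slope_mul (n : Fin K → ℕ) (k : Fin K) (jm : Fin (n k))
    (g : Option (Fin (n k)) → ℝ) :
    ∑ o : Option (Fin (n k)), slope n ⟨k, jm⟩ k o * g o = g (some jm) - g none := by
  classical
  rw [Fintype.sum_option]
  have h1 : ∀ m : Fin (n k), slope n ⟨k, jm⟩ k (some m) = if m = jm then 1 else 0 := by
    intro m
    simp only [slope, Sigma.mk.inj_iff, heq_eq_eq, true_and]
  have h2 : slope n (⟨k, jm⟩ : Elem n) k none = -1 := by simp [slope]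
  rw [h2, Finset.sum_congr rfl fun m _ => by rw [h1 m]]
  have : ∀ m : Fin (n k), (if m = jm then (1:ℝ) else 0) * g (some m)
      = if m = jm then g (some m) else 0 := by
    intro m; by_cases h : m = jm <;> simp [h]
  rw [Finset.sum_congr rfl fun m _ => this m, Finset.sum_ite_eq' Finset.univ jm]
  simp; ring

lemma Mf_nonneg (n : Fin K → ℕ) (f : Finset (Elem n) → ℝ) (hmono : MonotoneSet n f)
    (Mf : ℝ)
    (hMf : IsGreatest
      {r : ℝ | ∃ (S : Finset (Elem n)) (e : Elem n), e ∉ S ∧ r = marg n f e S} Mf) :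
    0 ≤ Mf := by
  obtain ⟨S, e, he, hr⟩ := hMf.1
  rw [hr]
  exact sub_nonneg.2 (hmono _ _ (Finset.subset_insert _ _))

lemma marg_bounds (n : Fin K → ℕ) (f : Finset (Elem n) → ℝ) (hmono : MonotoneSet n f)
    (Mf : ℝ)
    (hMf : IsGreatest
      {r : ℝ | ∃ (S : Finset (Elem n)) (e : Elem n), e ∉ S ∧ r = marg n f e S} Mf)
    (A : Finset (Elem n)) (u : Elem n) :
    0 ≤ f (insert u A) - f A ∧ f (insert u A) - f A ≤ Mf := by
  constructor
  · exact sub_nonneg.2 (hmono _ _ (Finset.subset_insert _ _))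
  · by_cases hu : u ∈ A
    · rw [Finset.insert_eq_self.2 hu, sub_self]
      exact Mf_nonneg n f hmono Mf hMf
    · exact hMf.2 ⟨A, u, hu, rfl⟩

lemma quad_bound (n : Fin K → ℕ) (f : Finset (Elem n) → ℝ) (hmono : MonotoneSet n f)
    (Mf : ℝ)
    (hMf : IsGreatest
      {r : ℝ | ∃ (S : Finset (Elem n)) (e : Elem n), e ∉ S ∧ r = marg n f e S} Mf)
    (A : Finset (Elem n)) (u v : Elem n) :
    |f (insert u (insert v A)) - f (insert u A) - (f (insert v A) - f A)| ≤ Mf := by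
  have h1 := marg_bounds n f hmono Mf hMf (insert u A) v
  have h2 := marg_bounds n f hmono Mf hMf A v
  rw [Finset.insert_comm] at h1
  rw [abs_le]
  constructor <;> [skip; skip] <;>
    · have := h1.1; have := h1.2; have := h2.1; have := h2.2; linarith

lemma prob_nonneg (n : Fin K → ℕ) (x : Elem n → ℝ) (hx : InSimplex n x) (k : Fin K)
    (o : Option (Fin (n k))) : 0 ≤ prob n x k o := by
  cases o with
  | some m => exact hx.1 _
  | none => exact sub_nonneg.2 (hx.2 k)

lemma P_nonneg (n B : Fin K → ℕ) (A : Finset (Slot B)) (x : Elem n → ℝ)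
    (hx : InSimplex n x) (e : Choice n B) : 0 ≤ P n B A x e :=
  Finset.prod_nonneg fun s _ => prob_nonneg n x hx s.1 (e s)

lemma sum_prob (n : Fin K → ℕ) (x : Elem n → ℝ) (k : Fin K) :
    ∑ o : Option (Fin (n k)), prob n x k o = 1 := by
  rw [Fintype.sum_option]
  simp [prob]

lemma sum_fiber_P (n B : Fin K → ℕ) (x : Elem n → ℝ) (s₁ s₂ : Slot B) (h12 : s₁ ≠ s₂) :
    ∑ e ∈ Finset.univ.filter
        (fun e : Choice n B => (e s₁, e s₂) = ((none : Option (Fin (n s₁.1))),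
          (none : Option (Fin (n s₂.1))))),
      P n B ((Finset.univ.erase s₁).erase s₂) x e = 1 := by
  classical
  set R := (Finset.univ.erase s₁).erase s₂ with hR
  set q : ∀ s : Slot B, Option (Fin (n s.1)) → ℝ :=
    fun s o => if s = s₁ ∨ s = s₂ then (if o = none then 1 else 0) else prob n x s.1 o with hq
  have hs2R : s₂ ∉ R := Finset.notMem_erase _ _
  have hs1R : s₁ ∉ R := fun h => Finset.notMem_erase s₁ Finset.univ (Finset.mem_of_mem_erase h)
  have h2 : s₂ ∈ Finset.univ.erase s₁ :=
    Finset.mem_erase.2 ⟨fun h => h12 h.symm, Finset.mem_univ _⟩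
  have huniv : (Finset.univ : Finset (Slot B)) = insert s₁ (insert s₂ R) := by
    rw [hR, Finset.insert_erase h2, Finset.insert_erase (Finset.mem_univ s₁)]
  have key : ∀ e ∈ Finset.univ.filter
      (fun e : Choice n B => (e s₁, e s₂) = (none, none)),
      P n B R x e = ∏ s : Slot B, q s (e s) := by
    intro e he
    obtain ⟨he1, he2⟩ : e s₁ = none ∧ e s₂ = none := by
      have := (Finset.mem_filter.1 he).2
      exact ⟨congrArg Prod.fst this, congrArg Prod.snd this⟩
    rw [show (∏ s : Slot B, q s (e s)) = ∏ s ∈ insert s₁ (insert s₂ R), q s (e s) by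
        rw [← huniv]]
    rw [Finset.prod_insert (by simp [Finset.mem_insert, h12, hs1R]),
      Finset.prod_insert hs2R]
    have hq1 : q s₁ (e s₁) = 1 := by simp [hq, he1]
    have hq2 : q s₂ (e s₂) = 1 := by simp [hq, he2]
    rw [hq1, hq2, one_mul, one_mul]
    refine Finset.prod_congr rfl fun s hs => ?_
    have hne1 : s ≠ s₁ := fun h => hs1R (h ▸ hs)
    have hne2 : s ≠ s₂ := fun h => hs2R (h ▸ hs)
    simp [hq, hne1, hne2]
  rw [Finset.sum_congr rfl key]
  rw [Finset.sum_subset (Finset.filter_subset _ _) (by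
    intro e _ hne
    rw [Finset.mem_filter, not_and] at hne
    have hne' := hne (Finset.mem_univ e)
    rw [Prod.mk.injEq, not_and_or] at hne'
    rcases hne' with h | h
    · exact Finset.prod_eq_zero (Finset.mem_univ s₁) (by simp [hq, h])
    · exact Finset.prod_eq_zero (Finset.mem_univ s₂) (by simp [hq, h]))]
  rw [← Fintype.piFinset_univ,
    ← Finset.prod_univ_sum (fun _ : Slot B => Finset.univ) q]
  refine Finset.prod_eq_one fun s _ => ?_
  by_cases hs : s = s₁ ∨ s = s₂
  · have : ∀ o : Option (Fin (n s.1)), q s o = if o = none then 1 else 0 := by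
      intro o; simp [hq, hs]
    rw [Finset.sum_congr rfl fun o _ => this o, Finset.sum_ite_eq' Finset.univ none]
    simp
  · have : ∀ o : Option (Fin (n s.1)), q s o = prob n x s.1 o := by
      intro o; simp [hq, hs]
    rw [Finset.sum_congr rfl fun o _ => this o, sum_prob]

lemma T_bound (n B : Fin K → ℕ) (f : Finset (Elem n) → ℝ) (hmono : MonotoneSet n f)
    (Mf : ℝ)
    (hMf : IsGreatest
      {r : ℝ | ∃ (S : Finset (Elem n)) (e : Elem n), e ∉ S ∧ r = marg n f e S} Mf)
    (x : Elem n → ℝ) (hx : InSimplex n x) (s₁ s₂ : Slot B) (h12 : s₁ ≠ s₂)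
    (jm : Fin (n s₁.1)) (im : Fin (n s₂.1)) :
    |T n B f ⟨s₂.1, im⟩ ⟨s₁.1, jm⟩ x s₁ s₂| ≤ Mf := by
  classical
  set R := (Finset.univ.erase s₁).erase s₂ with hR
  set i : Elem n := ⟨s₂.1, im⟩ with hi
  set j : Elem n := ⟨s₁.1, jm⟩ with hj
  set body : Choice n B → ℝ := fun e => f (chosen n B e Finset.univ) *
    (P n B R x e * slope n i s₂.1 (e s₂) * slope n j s₁.1 (e s₁)) with hbody
  -- the update map
  set upd : ∀ (_ : Option (Fin (n s₁.1))) (_ : Option (Fin (n s₂.1))), Choice n B → Choice n B :=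
    fun a b e => Function.update (Function.update e s₁ a) s₂ b with hupd
  have upd1 : ∀ a b e, upd a b e s₁ = a := by
    intro a b e
    rw [hupd]
    simp only []
    rw [Function.update_of_ne h12, Function.update_self]
  have upd2 : ∀ a b e, upd a b e s₂ = b := by
    intro a b e; rw [hupd]; simp only []; rw [Function.update_self]
  have updne : ∀ a b e (s : Slot B), s ≠ s₁ → s ≠ s₂ → upd a b e s = e s := by
    intro a b e s hn1 hn2
    rw [hupd]; simp only []
    rw [Function.update_of_ne hn2, Function.update_of_ne hn1]
  have hagree : ∀ (a : Option (Fin (n s₁.1))) (b : Option (Fin (n s₂.1)))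
      (e : Choice n B) (s : Slot B), s ∈ R → upd a b e s = e s := by
    intro a b e s hs
    refine updne a b e s ?_ ?_
    · intro h
      subst h
      exact absurd (Finset.mem_of_mem_erase hs) (Finset.notMem_erase _ _)
    · intro h
      subst h
      exact absurd hs (Finset.notMem_erase _ _)
  have hchosenR : ∀ a b e, chosen n B (upd a b e) R = chosen n B e R := by
    intro a b e
    exact Finset.biUnion_congr rfl fun s hs => by rw [hagree a b e s hs]
  have hPR : ∀ a b e, P n B R x (upd a b e) = P n B R x e := by
    intro a b e
    exact Finset.prod_congr rfl fun s hs => by rw [hagree a b e s hs]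
  -- fiber decomposition
  have step1 : T n B f i j x s₁ s₂
      = ∑ ab : Option (Fin (n s₁.1)) × Option (Fin (n s₂.1)),
          ∑ e ∈ Finset.univ.filter (fun e : Choice n B => (e s₁, e s₂) = ab), body e :=
    (Finset.sum_fiberwise Finset.univ (fun e : Choice n B => (e s₁, e s₂)) body).symm
  -- reindex each fiber to the (none, none) fiber
  set fib0 : Finset (Choice n B) :=
    Finset.univ.filter (fun e : Choice n B => (e s₁, e s₂)
      = ((none : Option (Fin (n s₁.1))), (none : Option (Fin (n s₂.1))))) with hfib0
  have step2 : ∀ ab : Option (Fin (n s₁.1)) × Option (Fin (n s₂.1)),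
      ∑ e ∈ Finset.univ.filter (fun e : Choice n B => (e s₁, e s₂) = ab), body e
      = ∑ e ∈ fib0,
          f (toF n B s₁ ab.1 ∪ (toF n B s₂ ab.2 ∪ chosen n B e R)) * P n B R x e
            * (slope n i s₂.1 ab.2 * slope n j s₁.1 ab.1) := by
    intro ab
    refine Finset.sum_nbij' (fun e => upd none none e) (fun e => upd ab.1 ab.2 e)
      ?_ ?_ ?_ ?_ ?_
    · intro e he
      rw [hfib0, Finset.mem_filter]
      refine ⟨Finset.mem_univ _, ?_⟩
      show (upd none none e s₁, upd none none e s₂) = (none, none)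
      rw [upd1, upd2]
    · intro e he
      rw [Finset.mem_filter]
      refine ⟨Finset.mem_univ _, ?_⟩
      show (upd ab.1 ab.2 e s₁, upd ab.1 ab.2 e s₂) = ab
      rw [upd1, upd2]
    · intro e he
      have hm := (Finset.mem_filter.1 he).2
      have he1 : e s₁ = ab.1 := congrArg Prod.fst hm
      have he2 : e s₂ = ab.2 := congrArg Prod.snd hm
      show upd ab.1 ab.2 (upd none none e) = e
      funext s
      by_cases h1 : s = s₁
      · subst h1; rw [upd1, he1]
      · by_cases h2 : s = s₂
        · subst h2; rw [upd2, he2]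
        · rw [updne _ _ _ _ h1 h2, updne _ _ _ _ h1 h2]
    · intro e he
      have hm := (Finset.mem_filter.1 he).2
      have he1 : e s₁ = none := congrArg Prod.fst hm
      have he2 : e s₂ = none := congrArg Prod.snd hm
      show upd none none (upd ab.1 ab.2 e) = e
      funext s
      by_cases h1 : s = s₁
      · subst h1; rw [upd1, he1]
      · by_cases h2 : s = s₂
        · subst h2; rw [upd2, he2]
        · rw [updne _ _ _ _ h1 h2, updne _ _ _ _ h1 h2]
    · intro e he
      have hm := (Finset.mem_filter.1 he).2
      have he1 : e s₁ = ab.1 := congrArg Prod.fst hm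
      have he2 : e s₂ = ab.2 := congrArg Prod.snd hm
      show body e = f (toF n B s₁ ab.1 ∪ (toF n B s₂ ab.2 ∪ chosen n B (upd none none e) R))
          * P n B R x (upd none none e)
          * (slope n i s₂.1 ab.2 * slope n j s₁.1 ab.1)
      rw [hbody]
      simp only []
      rw [chosen_split n B e s₁ s₂ h12, ← hR, he1, he2,
        hchosenR none none e, hPR none none e]
      ring
  rw [step1, Finset.sum_congr rfl fun ab _ => step2 ab, Finset.sum_comm]
  -- inner quadruple sum
  have step3 : ∀ e ∈ fib0,
      (∑ ab : Option (Fin (n s₁.1)) × Option (Fin (n s₂.1)),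
        f (toF n B s₁ ab.1 ∪ (toF n B s₂ ab.2 ∪ chosen n B e R)) * P n B R x e
          * (slope n i s₂.1 ab.2 * slope n j s₁.1 ab.1))
      = P n B R x e *
          ∑ a : Option (Fin (n s₁.1)), slope n j s₁.1 a *
            ∑ b : Option (Fin (n s₂.1)), slope n i s₂.1 b *
              f (toF n B s₁ a ∪ (toF n B s₂ b ∪ chosen n B e R)) := by
    intro e _
    rw [Fintype.sum_prod_type, Finset.mul_sum]
    refine Finset.sum_congr rfl fun a _ => ?_
    rw [Finset.mul_sum, Finset.mul_sum]
    exact Finset.sum_congr rfl fun b _ => by ring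
  rw [Finset.sum_congr rfl step3]
  -- bound the inner double sum by Mf
  have hD : ∀ e : Choice n B,
      |∑ a : Option (Fin (n s₁.1)), slope n j s₁.1 a *
          ∑ b : Option (Fin (n s₂.1)), slope n i s₂.1 b *
            f (toF n B s₁ a ∪ (toF n B s₂ b ∪ chosen n B e R))| ≤ Mf := by
    intro e
    set A := chosen n B e R with hA
    have hinner : ∀ a : Option (Fin (n s₁.1)),
        (∑ b : Option (Fin (n s₂.1)), slope n i s₂.1 b *
          f (toF n B s₁ a ∪ (toF n B s₂ b ∪ A)))
        = f (toF n B s₁ a ∪ insert i A) - f (toF n B s₁ a ∪ A) := by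
      intro a
      rw [hi, sum_slope_mul n s₂.1 im
        (fun b => f (toF n B s₁ a ∪ (toF n B s₂ b ∪ A)))]
      have h1 : toF n B s₂ (some im) = {i} := by simp [toF, hi]
      have h2 : toF n B s₂ (none : Option (Fin (n s₂.1))) = ∅ := by simp [toF]
      rw [h1, h2, Finset.empty_union, ← Finset.insert_eq]
    rw [Finset.sum_congr rfl fun a _ => by rw [hinner a]]
    rw [hj, sum_slope_mul n s₁.1 jm
      (fun a => f (toF n B s₁ a ∪ insert i A) - f (toF n B s₁ a ∪ A))]
    have h1 : toF n B s₁ (some jm) = {j} := by simp [toF, hj]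
    have h2 : toF n B s₁ (none : Option (Fin (n s₁.1))) = ∅ := by simp [toF]
    rw [h1, h2, Finset.empty_union, Finset.empty_union, ← Finset.insert_eq,
      ← Finset.insert_eq]
    have := quad_bound n f hmono Mf hMf A j i
    calc |f (insert j (insert i A)) - f (insert j A) -
          (f (insert i A) - f A)|
        = |f (insert j (insert i A)) - f (insert j A) - (f (insert i A) - f A)| := rfl
      _ ≤ Mf := this
  -- conclude
  calc |∑ e ∈ fib0, P n B R x e * ∑ a : Option (Fin (n s₁.1)), slope n j s₁.1 a *
          ∑ b : Option (Fin (n s₂.1)), slope n i s₂.1 b *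
            f (toF n B s₁ a ∪ (toF n B s₂ b ∪ chosen n B e R))|
      ≤ ∑ e ∈ fib0, |P n B R x e * ∑ a : Option (Fin (n s₁.1)), slope n j s₁.1 a *
          ∑ b : Option (Fin (n s₂.1)), slope n i s₂.1 b *
            f (toF n B s₁ a ∪ (toF n B s₂ b ∪ chosen n B e R))| :=
        Finset.abs_sum_le_sum_abs _ _
    _ ≤ ∑ e ∈ fib0, P n B R x e * Mf := by
        refine Finset.sum_le_sum fun e _ => ?_
        rw [abs_mul, abs_of_nonneg (P_nonneg n B R x hx e)]
        exact mul_le_mul_of_nonneg_left (hD e) (P_nonneg n B R x hx e)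
    _ = (∑ e ∈ fib0, P n B R x e) * Mf := by rw [Finset.sum_mul]
    _ = Mf := by rw [hfib0, hR, sum_fiber_P n B x s₁ s₂ h12, one_mul]

lemma T_zero₁ (n B : Fin K → ℕ) (f : Finset (Elem n) → ℝ) (i j : Elem n) (x : Elem n → ℝ)
    (s₁ s₂ : Slot B) (h : s₁.1 ≠ j.1) : T n B f i j x s₁ s₂ = 0 := by
  refine Finset.sum_eq_zero fun e _ => ?_
  rw [slope_eq_zero n j s₁.1 h]
  ring

lemma T_zero₂ (n B : Fin K → ℕ) (f : Finset (Elem n) → ℝ) (i j : Elem n) (x : Elem n → ℝ)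
    (s₁ s₂ : Slot B) (h : s₂.1 ≠ i.1) : T n B f i j x s₁ s₂ = 0 := by
  refine Finset.sum_eq_zero fun e _ => ?_
  rw [slope_eq_zero n i s₂.1 h]
  ring

lemma count_slots (B : Fin K → ℕ) (k : Fin K) :
    ∑ s : Slot B, (if s.1 = k then (1:ℝ) else 0) = B k := by
  classical
  rw [← Finset.univ_sigma_univ, Finset.sum_sigma]
  have h : ∀ k' : Fin K, (∑ _m : Fin (B k'), if k' = k then (1:ℝ) else 0)
      = if k' = k then (B k' : ℝ) else 0 := by
    intro k'; by_cases h : k' = k <;> simp [h]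
  rw [Finset.sum_congr rfl fun k' _ => h k', Finset.sum_ite_eq' Finset.univ k]
  simp

theorem multinoulliExtension_pderiv2_bound {K : ℕ} (n B : Fin K → ℕ) (hn : ∀ k, 1 ≤ n k)
    (hB : ∀ k, 0 < B k) (hBn : ∀ k, B k ≤ n k)
    (f : Finset (Elem n) → ℝ) (hf0 : ∀ S, 0 ≤ f S)
    (hK : 0 < K) (hmono : MonotoneSet n f)
    (Mf : ℝ)
    (hMf : IsGreatest
      {r : ℝ | ∃ (S : Finset (Elem n)) (e : Elem n), e ∉ S ∧ r = marg n f e S} Mf)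
    (x : Elem n → ℝ) (hx : InSimplex n x)
    (k₁ k₂ : Fin K) (m₁ : Fin (n k₁)) (m₂ : Fin (n k₂)) :
    |pderiv2 n (ME n B f) ⟨k₁, m₁⟩ ⟨k₂, m₂⟩ x| ≤
      ((Finset.univ.sup B : ℕ) : ℝ) ^ 2 * Mf := by
  classical
  have hMf0 : 0 ≤ Mf := Mf_nonneg n f hmono Mf hMf
  rw [pderiv2_ME n B f ⟨k₁, m₁⟩ ⟨k₂, m₂⟩ x]
  have habs : |∑ s₁ : Slot B, ∑ s₂ ∈ Finset.univ.erase s₁,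
      T n B f ⟨k₁, m₁⟩ ⟨k₂, m₂⟩ x s₁ s₂|
      ≤ ∑ s₁ : Slot B, ∑ s₂ ∈ Finset.univ.erase s₁,
          |T n B f ⟨k₁, m₁⟩ ⟨k₂, m₂⟩ x s₁ s₂| :=
    (Finset.abs_sum_le_sum_abs _ _).trans
      (Finset.sum_le_sum fun s₁ _ => Finset.abs_sum_le_sum_abs _ _)
  refine habs.trans ?_
  have hterm : ∀ s₁ ∈ (Finset.univ : Finset (Slot B)),
      ∀ s₂ ∈ Finset.univ.erase s₁,
      |T n B f ⟨k₁, m₁⟩ ⟨k₂, m₂⟩ x s₁ s₂|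
        ≤ (if s₁.1 = k₂ ∧ s₂.1 = k₁ then Mf else 0) := by
    intro s₁ _ s₂ hs₂
    by_cases h1 : s₁.1 = k₂
    · by_cases h2 : s₂.1 = k₁
      · rw [if_pos ⟨h1, h2⟩]
        have h12 : s₁ ≠ s₂ := Ne.symm (Finset.mem_erase.1 hs₂).1
        obtain ⟨sk1, sb1⟩ := s₁
        obtain ⟨sk2, sb2⟩ := s₂
        subst h1
        subst h2
        exact T_bound n B f hmono Mf hMf x hx ⟨sk1, sb1⟩ ⟨sk2, sb2⟩ h12 m₂ m₁
      · rw [T_zero₂ n B f ⟨k₁, m₁⟩ ⟨k₂, m₂⟩ x s₁ s₂ h2, if_neg (fun hc => h2 hc.2)]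
        simp
    · rw [T_zero₁ n B f ⟨k₁, m₁⟩ ⟨k₂, m₂⟩ x s₁ s₂ h1, if_neg (fun hc => h1 hc.1)]
      simp
  refine (Finset.sum_le_sum fun s₁ hs₁ => Finset.sum_le_sum (hterm s₁ hs₁)).trans ?_
  have hmono2 : ∑ s₁ : Slot B, ∑ s₂ ∈ Finset.univ.erase s₁,
      (if s₁.1 = k₂ ∧ s₂.1 = k₁ then Mf else 0)
      ≤ ∑ s₁ : Slot B, ∑ s₂ : Slot B, (if s₁.1 = k₂ ∧ s₂.1 = k₁ then Mf else 0) := by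
    refine Finset.sum_le_sum fun s₁ _ => ?_
    refine Finset.sum_le_sum_of_subset_of_nonneg (Finset.subset_univ _) ?_
    intro s₂ _ _
    split_ifs <;> simp [hMf0]
  refine hmono2.trans ?_
  have hsplit : ∀ s₁ s₂ : Slot B, (if s₁.1 = k₂ ∧ s₂.1 = k₁ then Mf else 0)
      = (if s₁.1 = k₂ then (1:ℝ) else 0) * ((if s₂.1 = k₁ then (1:ℝ) else 0) * Mf) := by
    intro s₁ s₂
    by_cases h1 : s₁.1 = k₂ <;> by_cases h2 : s₂.1 = k₁ <;> simp [h1, h2]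
  have hcount : ∑ s₁ : Slot B, ∑ s₂ : Slot B, (if s₁.1 = k₂ ∧ s₂.1 = k₁ then Mf else 0)
      = (B k₂ : ℝ) * ((B k₁ : ℝ) * Mf) := by
    rw [Finset.sum_congr rfl fun s₁ _ => Finset.sum_congr rfl fun s₂ _ => hsplit s₁ s₂]
    rw [Finset.sum_congr rfl fun s₁ (_ : s₁ ∈ Finset.univ) =>
      (Finset.mul_sum Finset.univ (fun s₂ : Slot B =>
        (if s₂.1 = k₁ then (1:ℝ) else 0) * Mf) (if s₁.1 = k₂ then (1:ℝ) else 0)).symm]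
    rw [← Finset.sum_mul, ← Finset.sum_mul, count_slots B k₂, count_slots B k₁]
  rw [hcount]
  have hS0 : (0:ℝ) ≤ ((Finset.univ.sup B : ℕ) : ℝ) := Nat.cast_nonneg _
  have hb2 : (B k₂ : ℝ) ≤ ((Finset.univ.sup B : ℕ) : ℝ) :=
    Nat.cast_le.2 (Finset.le_sup (Finset.mem_univ k₂))
  have hb1 : (B k₁ : ℝ) ≤ ((Finset.univ.sup B : ℕ) : ℝ) :=
    Nat.cast_le.2 (Finset.le_sup (Finset.mem_univ k₁))
  calc (B k₂ : ℝ) * ((B k₁ : ℝ) * Mf)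
      ≤ ((Finset.univ.sup B : ℕ) : ℝ) * (((Finset.univ.sup B : ℕ) : ℝ) * Mf) := by
        refine mul_le_mul hb2 (mul_le_mul hb1 le_rfl hMf0 hS0) ?_ hS0
        exact mul_nonneg (Nat.cast_nonneg _) hMf0
    _ = ((Finset.univ.sup B : ℕ) : ℝ) ^ 2 * Mf := by ring


end Multinoulli
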